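/- Given a sequence θ*₁,…,θ*_{N-1} in ℝ^d with total variation V = ∑_{n=1}^{N-2} ‖θ*_{n+1} - θ*_n‖₂, and a constant κ > 0, there exist indices 0 = N₀ < N₁ < ⋯ < N_J = N-1 such that max_{N_{j-1} < i,k ≤ N_j} ‖θ*_i - θ*_k‖₂ ≤ κ / √(N_j - N_{j-1}) for all j ∈ [J], and J ≤ 1 + (2/κ²)^{1/3} · (N-1)^{1/3} · V^{2/3}. -/

import Mathlib

open Finset

namespace TvSegAux

variable {d : ℕ}

lemma norm_sub_le_edgeSum (θ : ℕ → EuclideanSpace ℝ (Fin d)) {i k : ℕ} (h : i ≤ k) :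
    ‖θ k - θ i‖ ≤ ∑ m ∈ Finset.Ico i k, ‖θ (m + 1) - θ m‖ := by
  induction k, h using Nat.le_induction with
  | base => simp
  | succ k hk ih =>
    rw [Finset.sum_Ico_succ_top (by omega)]
    have he : θ (k + 1) - θ i = (θ k - θ i) + (θ (k + 1) - θ k) := by abel
    calc ‖θ (k + 1) - θ i‖ ≤ ‖θ k - θ i‖ + ‖θ (k + 1) - θ k‖ := by
          rw [he]; exact norm_add_le _ _
      _ ≤ _ := by linarith

open Classical in
noncomputable def nxt (N : ℕ) (θ : ℕ → EuclideanSpace ℝ (Fin d)) (κ : ℝ) (s : ℕ) : ℕ :=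
  Nat.findGreatest (fun n => s < n ∧
    (∑ m ∈ Finset.Ico (s + 1) n, ‖θ (m + 1) - θ m‖) ≤ κ / Real.sqrt ((n : ℝ) - (s : ℝ))) (N - 1)

noncomputable def Ns (N : ℕ) (θ : ℕ → EuclideanSpace ℝ (Fin d)) (κ : ℝ) : ℕ → ℕ
  | 0 => 0
  | j + 1 => nxt N θ κ (Ns N θ κ j)

section
variable (N : ℕ) (θ : ℕ → EuclideanSpace ℝ (Fin d)) (κ : ℝ)

lemma P_base (hκ : 0 < κ) (s : ℕ) :
    s < s + 1 ∧
    (∑ m ∈ Finset.Ico (s + 1) (s + 1), ‖θ (m + 1) - θ m‖) ≤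
      κ / Real.sqrt (((s + 1 : ℕ) : ℝ) - (s : ℝ)) := by
  refine ⟨Nat.lt_succ_self s, ?_⟩
  have : (((s + 1 : ℕ) : ℝ) - (s : ℝ)) = 1 := by push_cast; ring
  rw [this, Finset.Ico_self, Finset.sum_empty, Real.sqrt_one, div_one]
  exact hκ.le

lemma nxt_spec (hκ : 0 < κ) {s : ℕ} (hs : s < N - 1) :
    s < nxt N θ κ s ∧ nxt N θ κ s ≤ N - 1 ∧
    (∑ m ∈ Finset.Ico (s + 1) (nxt N θ κ s), ‖θ (m + 1) - θ m‖) ≤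
      κ / Real.sqrt ((nxt N θ κ s : ℝ) - (s : ℝ)) := by
  classical
  have hb := P_base θ κ hκ s
  have h1 : s + 1 ≤ nxt N θ κ s := Nat.le_findGreatest (by omega) hb
  have h2 : nxt N θ κ s ≤ N - 1 := Nat.findGreatest_le _
  have h3 := Nat.findGreatest_spec (P := fun n => s < n ∧
    (∑ m ∈ Finset.Ico (s + 1) n, ‖θ (m + 1) - θ m‖) ≤ κ / Real.sqrt ((n : ℝ) - (s : ℝ)))
    (m := s + 1) (n := N - 1) (by omega) hb
  exact ⟨by omega, h2, h3.2⟩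

lemma nxt_max (hκ : 0 < κ) {s k : ℕ} (hs : s < N - 1) (h1 : nxt N θ κ s < k) (h2 : k ≤ N - 1) :
    ¬ (s < k ∧
      (∑ m ∈ Finset.Ico (s + 1) k, ‖θ (m + 1) - θ m‖) ≤ κ / Real.sqrt ((k : ℝ) - (s : ℝ))) := by
  classical
  exact Nat.findGreatest_is_greatest h1 h2

end


section Main
variable (N : ℕ) (θ : ℕ → EuclideanSpace ℝ (Fin d)) (κ : ℝ)

lemma Ns_invariant (hκ : 0 < κ) (j : ℕ) :
    (∃ i ≤ j, Ns N θ κ i = N - 1) ∨ (j ≤ Ns N θ κ j ∧ Ns N θ κ j ≤ N - 1) := by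
  induction j with
  | zero => right; simp [Ns]
  | succ j ih =>
    rcases ih with ⟨i, hi, h⟩ | ⟨h1, h2⟩
    · exact Or.inl ⟨i, by omega, h⟩
    · by_cases hlt : Ns N θ κ j = N - 1
      · exact Or.inl ⟨j, by omega, hlt⟩
      · have hs : Ns N θ κ j < N - 1 := by omega
        obtain ⟨a, b, _⟩ := nxt_spec N θ κ hκ hs
        right
        exact ⟨by simpa [Ns] using by omega, by simpa [Ns] using b⟩

lemma exists_J (hκ : 0 < κ) : ∃ j, Ns N θ κ j = N - 1 := by
  rcases Ns_invariant N θ κ hκ (N - 1) with ⟨i, _, h⟩ | ⟨h1, h2⟩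
  · exact ⟨i, h⟩
  · exact ⟨N - 1, le_antisymm h2 h1⟩

end Main


lemma chain_mono (g : ℕ → ℕ) : ∀ u, (∀ j < u, g j ≤ g (j + 1)) → g 0 ≤ g u := by
  intro u
  induction u with
  | zero => intro _; exact le_rfl
  | succ u ih =>
    intro hg
    exact (ih fun j hj => hg j (by omega)).trans (hg u (by omega))

lemma sum_Ico_chain (f : ℕ → ℝ) (g : ℕ → ℕ) :
    ∀ u, (∀ j < u, g j ≤ g (j + 1)) →
    ∑ j ∈ Finset.range u, ∑ m ∈ Finset.Ico (g j + 1) (g (j + 1) + 1), f m =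
      ∑ m ∈ Finset.Ico (g 0 + 1) (g u + 1), f m := by
  intro u
  induction u with
  | zero => intro _; simp
  | succ u ih =>
    intro hg
    rw [Finset.sum_range_succ, ih fun j hj => hg j (by omega)]
    have h0u : g 0 ≤ g u := chain_mono g u fun j hj => hg j (by omega)
    have huu : g u ≤ g (u + 1) := hg u (by omega)
    exact Finset.sum_Ico_consecutive f (by omega) (by omega)

lemma one_le_term {κ a b : ℝ} (hκ : 0 < κ) (ha : 1 ≤ a) (hb : κ / Real.sqrt (a + 1) < b) :
    1 ≤ (2 / κ ^ 2) ^ ((1 : ℝ) / 3) * a ^ ((1 : ℝ) / 3) * b ^ ((2 : ℝ) / 3) := by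
  have hsq : 0 < Real.sqrt (a + 1) := Real.sqrt_pos.2 (by linarith)
  have hb0 : 0 < b := lt_trans (div_pos hκ hsq) hb
  have hκ2 : κ < b * Real.sqrt (a + 1) := (div_lt_iff₀ hsq).1 hb
  have hmono : Real.sqrt (a + 1) ≤ Real.sqrt (2 * a) := Real.sqrt_le_sqrt (by linarith)
  have hk : κ ≤ b * Real.sqrt (2 * a) :=
    hκ2.le.trans (mul_le_mul_of_nonneg_left hmono hb0.le)
  have h2a : Real.sqrt (2 * a) * Real.sqrt (2 * a) = 2 * a :=
    Real.mul_self_sqrt (by linarith)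
  have hsq2 : κ ^ 2 ≤ 2 * a * b ^ 2 := by nlinarith [Real.sqrt_nonneg (2 * a)]
  have hbase : 1 ≤ 2 / κ ^ 2 * a * b ^ 2 := by
    rw [div_mul_eq_mul_div, div_mul_eq_mul_div, le_div_iff₀ (by positivity)]
    linarith
  have hb23 : b ^ ((2 : ℝ) / 3) = (b ^ 2) ^ ((1 : ℝ) / 3) := by
    rw [← Real.rpow_natCast b 2, ← Real.rpow_mul hb0.le]
    norm_num
  have heq : (2 / κ ^ 2) ^ ((1 : ℝ) / 3) * a ^ ((1 : ℝ) / 3) * b ^ ((2 : ℝ) / 3) =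
      (2 / κ ^ 2 * a * b ^ 2) ^ ((1 : ℝ) / 3) := by
    rw [hb23, ← Real.mul_rpow (by positivity) (by positivity),
      ← Real.mul_rpow (by positivity) (by positivity)]
  calc (1 : ℝ) = 1 ^ ((1 : ℝ) / 3) := (Real.one_rpow _).symm
    _ ≤ (2 / κ ^ 2 * a * b ^ 2) ^ ((1 : ℝ) / 3) :=
        Real.rpow_le_rpow (by norm_num) hbase (by norm_num)
    _ = _ := heq.symm

end TvSegAux

theorem tv_to_segmentation {d : ℕ} (N : ℕ) (hN : 2 ≤ N)
    (θ : ℕ → EuclideanSpace ℝ (Fin d)) (κ : ℝ) (hκ : 0 < κ) :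
    ∃ (J : ℕ) (Ns : ℕ → ℕ), 0 < J ∧ Ns 0 = 0 ∧ Ns J = N - 1 ∧
      (∀ j < J, Ns j < Ns (j + 1)) ∧
      (∀ j < J, ∀ i k : ℕ, Ns j < i → i ≤ Ns (j + 1) → Ns j < k → k ≤ Ns (j + 1) →
        ‖θ i - θ k‖ ≤ κ / Real.sqrt ((Ns (j + 1) : ℝ) - (Ns j : ℝ))) ∧
      (J : ℝ) ≤ 1 + (2 / κ ^ 2) ^ ((1 : ℝ) / 3) * ((N : ℝ) - 1) ^ ((1 : ℝ) / 3) *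
        (∑ n ∈ Finset.Icc 1 (N - 2), ‖θ (n + 1) - θ n‖) ^ ((2 : ℝ) / 3) := by
  classical
  obtain hex := TvSegAux.exists_J N θ κ hκ
  set Ns := TvSegAux.Ns N θ κ with hNsdef
  have hrec : ∀ j, Ns (j + 1) = TvSegAux.nxt N θ κ (Ns j) := fun j => rfl
  have hNs0 : Ns 0 = 0 := rfl
  set J := Nat.find hex with hJdef
  have hJspec : Ns J = N - 1 := Nat.find_spec hex
  have hJmin : ∀ j < J, Ns j ≠ N - 1 := fun j hj => Nat.find_min hex hj
  have hloc : ∀ j < J, Ns j < N - 1 := by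
    intro j hj
    rcases TvSegAux.Ns_invariant N θ κ hκ j with ⟨i, hi, h⟩ | ⟨h1, h2⟩
    · exact absurd h (hJmin i (by omega))
    · exact lt_of_le_of_ne h2 (hJmin j hj)
  have hJpos : 0 < J := by
    rcases Nat.eq_zero_or_pos J with h0 | h
    · exfalso; rw [h0] at hJspec; rw [hNs0] at hJspec; omega
    · exact h
  have hstep : ∀ j < J, Ns j < Ns (j + 1) ∧ Ns (j + 1) ≤ N - 1 ∧
      (∑ m ∈ Finset.Ico (Ns j + 1) (Ns (j + 1)), ‖θ (m + 1) - θ m‖) ≤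
        κ / Real.sqrt ((Ns (j + 1) : ℝ) - (Ns j : ℝ)) := by
    intro j hj
    have := TvSegAux.nxt_spec N θ κ hκ (hloc j hj)
    rw [← hrec j] at this
    exact this
  refine ⟨J, Ns, hJpos, hNs0, hJspec, fun j hj => (hstep j hj).1, ?_, ?_⟩
  · -- pairwise bound
    intro j hj i k hi1 hi2 hk1 hk2
    obtain ⟨hlt, hle, hsum⟩ := hstep j hj
    have key : ∀ a b : ℕ, Ns j < a → a ≤ Ns (j + 1) → Ns j < b → b ≤ Ns (j + 1) → a ≤ b →
        ‖θ b - θ a‖ ≤ κ / Real.sqrt ((Ns (j + 1) : ℝ) - (Ns j : ℝ)) := by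
      intro a b ha1 ha2 hb1 hb2 hab
      calc ‖θ b - θ a‖ ≤ ∑ m ∈ Finset.Ico a b, ‖θ (m + 1) - θ m‖ :=
            TvSegAux.norm_sub_le_edgeSum θ hab
        _ ≤ ∑ m ∈ Finset.Ico (Ns j + 1) (Ns (j + 1)), ‖θ (m + 1) - θ m‖ :=
            Finset.sum_le_sum_of_subset_of_nonneg
              (Finset.Ico_subset_Ico (by omega) (by omega))
              (fun _ _ _ => norm_nonneg _)
        _ ≤ _ := hsum
    rcases le_total i k with h | h
    · rw [norm_sub_rev]; exact key i k hi1 hi2 hk1 hk2 h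
    · exact key k i hk1 hk2 hi1 hi2 h
  · -- counting bound
    set V := ∑ n ∈ Finset.Icc 1 (N - 2), ‖θ (n + 1) - θ n‖ with hVdef
    have hV0 : 0 ≤ V := Finset.sum_nonneg fun _ _ => norm_nonneg _
    set t := J - 1 with htdef
    set c := (2 / κ ^ 2) ^ ((1 : ℝ) / 3) with hcdef
    have hc0 : 0 ≤ c := Real.rpow_nonneg (by positivity) _
    set A : ℕ → ℝ := fun j => ((Ns (j + 1) : ℝ) - (Ns j : ℝ)) with hAdef
    set B : ℕ → ℝ := fun j => ∑ m ∈ Finset.Ico (Ns j + 1) (Ns (j + 1) + 1), ‖θ (m + 1) - θ m‖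
      with hBdef
    have hA1 : ∀ j < J, 1 ≤ A j := by
      intro j hj
      have h := (hstep j hj).1
      have : (Ns j : ℝ) + 1 ≤ (Ns (j + 1) : ℝ) := by exact_mod_cast h
      simp only [hAdef]; linarith
    have hB0 : ∀ j, 0 ≤ B j := fun j => Finset.sum_nonneg fun _ _ => norm_nonneg _
    have hterm : ∀ j ∈ Finset.range t, (1 : ℝ) ≤
        c * (A j) ^ ((1 : ℝ) / 3) * (B j) ^ ((2 : ℝ) / 3) := by
      intro j hj
      rw [Finset.mem_range] at hj
      have hjJ : j < J := by omega
      have hj1J : j + 1 < J := by omega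
      have hup : Ns (j + 1) < N - 1 := hloc (j + 1) hj1J
      have hmax := TvSegAux.nxt_max N θ κ hκ (hloc j hjJ)
        (show TvSegAux.nxt N θ κ (Ns j) < Ns (j + 1) + 1 by rw [← hrec j]; omega)
        (show Ns (j + 1) + 1 ≤ N - 1 by omega)
      have hfail : κ / Real.sqrt (((Ns (j + 1) + 1 : ℕ) : ℝ) - (Ns j : ℝ)) < B j := by
        by_contra hcon
        push_neg at hcon
        exact hmax ⟨by have := (hstep j hjJ).1; omega, hcon⟩
      have hcast : (((Ns (j + 1) + 1 : ℕ) : ℝ) - (Ns j : ℝ)) = A j + 1 := by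
        simp only [hAdef]; push_cast; ring
      rw [hcast] at hfail
      exact TvSegAux.one_le_term hκ (hA1 j hjJ) hfail
    have hsumA : ∑ j ∈ Finset.range t, A j ≤ (N : ℝ) - 1 := by
      have he : ∑ j ∈ Finset.range t, A j = (Ns t : ℝ) - (Ns 0 : ℝ) :=
        Finset.sum_range_sub (fun j => (Ns j : ℝ)) t
      have hNt : Ns t ≤ N - 1 := (hloc t (by omega)).le
      have : (Ns t : ℝ) ≤ (N : ℝ) - 1 := by
        have : ((Ns t : ℕ) : ℝ) ≤ ((N - 1 : ℕ) : ℝ) := by exact_mod_cast hNt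
        rwa [Nat.cast_sub (by omega), Nat.cast_one] at this
      rw [he, hNs0]
      simpa using this
    have hsumA0 : 0 ≤ ∑ j ∈ Finset.range t, A j :=
      Finset.sum_nonneg fun j hj => le_trans zero_le_one (hA1 j (by
        rw [Finset.mem_range] at hj; omega))
    have hsumB : ∑ j ∈ Finset.range t, B j ≤ V := by
      rw [hBdef]
      rw [TvSegAux.sum_Ico_chain (fun m => ‖θ (m + 1) - θ m‖) Ns t
        (fun j hj => (hstep j (by omega)).1.le)]
      rw [hNs0]
      have hss : Finset.Ico (0 + 1) (Ns t + 1) ⊆ Finset.Icc 1 (N - 2) := by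
        rw [Finset.Ico_add_one_right_eq_Icc]
        exact Finset.Icc_subset_Icc le_rfl (by have := hloc t (by omega); omega)
      exact Finset.sum_le_sum_of_subset_of_nonneg hss fun _ _ _ => norm_nonneg _
    have hsumB0 : 0 ≤ ∑ j ∈ Finset.range t, B j := Finset.sum_nonneg fun j _ => hB0 j
    have hhold : ∑ j ∈ Finset.range t, (A j) ^ ((1 : ℝ) / 3) * (B j) ^ ((2 : ℝ) / 3) ≤
        (∑ j ∈ Finset.range t, A j) ^ ((1 : ℝ) / 3) *
          (∑ j ∈ Finset.range t, B j) ^ ((2 : ℝ) / 3) := by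
      have hpq : Real.HolderConjugate 3 (3 / 2) := ⟨by norm_num, by norm_num, by norm_num⟩
      have hAn : ∀ j ∈ Finset.range t, (0 : ℝ) ≤ A j := fun j hj => by
        have : 1 ≤ A j := hA1 j (by rw [Finset.mem_range] at hj; omega)
        linarith
      have H := Real.inner_le_Lp_mul_Lq_of_nonneg (s := Finset.range t)
        (f := fun j => (A j) ^ ((1 : ℝ) / 3)) (g := fun j => (B j) ^ ((2 : ℝ) / 3)) hpq
        (fun j hj => Real.rpow_nonneg (hAn j hj) _)
        (fun j _ => Real.rpow_nonneg (hB0 j) _)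
      have e1 : ∑ j ∈ Finset.range t, ((A j) ^ ((1 : ℝ) / 3)) ^ (3 : ℝ) =
          ∑ j ∈ Finset.range t, A j :=
        Finset.sum_congr rfl fun j hj => by
          rw [← Real.rpow_mul (hAn j hj), show ((1 : ℝ) / 3) * 3 = 1 by norm_num,
            Real.rpow_one]
      have e2 : ∑ j ∈ Finset.range t, ((B j) ^ ((2 : ℝ) / 3)) ^ ((3 : ℝ) / 2) =
          ∑ j ∈ Finset.range t, B j :=
        Finset.sum_congr rfl fun j hj => by
          rw [← Real.rpow_mul (hB0 j), show ((2 : ℝ) / 3) * (3 / 2) = 1 by norm_num,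
            Real.rpow_one]
      rw [e1, e2, show (1 : ℝ) / (3 / 2) = 2 / 3 by norm_num] at H
      exact H
    have hN2 : (2 : ℝ) ≤ (N : ℝ) := by exact_mod_cast hN
    have hchain : (J : ℝ) - 1 ≤ c * (((N : ℝ) - 1) ^ ((1 : ℝ) / 3) * V ^ ((2 : ℝ) / 3)) := by
      have h1 : ((J : ℝ) - 1) = ∑ j ∈ Finset.range t, (1 : ℝ) := by
        rw [Finset.sum_const, Finset.card_range, nsmul_eq_mul, mul_one, htdef,
          Nat.cast_sub hJpos, Nat.cast_one]
      calc (J : ℝ) - 1 = ∑ j ∈ Finset.range t, (1 : ℝ) := h1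
        _ ≤ ∑ j ∈ Finset.range t, c * (A j) ^ ((1 : ℝ) / 3) * (B j) ^ ((2 : ℝ) / 3) :=
            Finset.sum_le_sum hterm
        _ = c * ∑ j ∈ Finset.range t, (A j) ^ ((1 : ℝ) / 3) * (B j) ^ ((2 : ℝ) / 3) := by
            simp_rw [mul_assoc]; rw [← Finset.mul_sum]
        _ ≤ c * ((∑ j ∈ Finset.range t, A j) ^ ((1 : ℝ) / 3) *
              (∑ j ∈ Finset.range t, B j) ^ ((2 : ℝ) / 3)) :=
            mul_le_mul_of_nonneg_left hhold hc0
        _ ≤ c * (((N : ℝ) - 1) ^ ((1 : ℝ) / 3) * V ^ ((2 : ℝ) / 3)) := by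
            refine mul_le_mul_of_nonneg_left ?_ hc0
            exact mul_le_mul (Real.rpow_le_rpow hsumA0 hsumA (by norm_num))
              (Real.rpow_le_rpow hsumB0 hsumB (by norm_num))
              (Real.rpow_nonneg hsumB0 _)
              (Real.rpow_nonneg (by linarith) _)
    rw [← mul_assoc] at hchain
    linarith
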